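/- Let P and Q be finite pure posets with rank functions rk, let n = rk(P) be the length of the maximal chains of P, let C_n be a chain with n+1 elements, and let Q̃ = (Q × C_n)_{[0,n]} be the rank-selected subposet of the product poset Q × C_n consisting of all elements of rank at most n. Then the Rees product P * Q is isomorphic as a poset to the unmixed Segre product P ∘ Q̃ = {(p, q̃) ∈ P × Q̃ | rk(p) = rk(q̃)}; explicitly, the map sending (p, q, i) with rk(p) = rk(q) + i to (p, q) is a poset isomorphism P ∘ Q̃ → P * Q. -/

import Mathlib

noncomputable section

open Classical

def rankIn (P : Type) [PartialOrder P] (x : P) : ℕ := (Order.height x).toNat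

/-- A poset is pure if all its (inclusion-)maximal chains have the same length
(equivalently, the same cardinality). -/
def IsPurePoset (P : Type) [PartialOrder P] : Prop :=
  ∀ c₁ c₂ : Set P, IsMaxChain (· ≤ ·) c₁ → IsMaxChain (· ≤ ·) c₂ → c₁.ncard = c₂.ncard

/-- The underlying set of the Rees product `P * Q` of two (pure) posets:
pairs `(p, q)` with `rk p ≥ rk q`. -/
@[ext]
structure ReesProduct (P Q : Type) [PartialOrder P] [PartialOrder Q] where
  pr : P × Q
  rank_le : rankIn Q pr.2 ≤ rankIn P pr.1

/-- The order of the Rees product: `(p, q) ≤ (p', q')` iff `p ≤ p'`, `q ≤ q'` and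
`rk p' - rk p ≥ rk q' - rk q`. -/
instance (P Q : Type) [PartialOrder P] [PartialOrder Q] : PartialOrder (ReesProduct P Q) where
  le a b := a.pr.1 ≤ b.pr.1 ∧ a.pr.2 ≤ b.pr.2 ∧
    (rankIn Q b.pr.2 : ℤ) - (rankIn Q a.pr.2 : ℤ) ≤
      (rankIn P b.pr.1 : ℤ) - (rankIn P a.pr.1 : ℤ)
  le_refl a := ⟨le_refl _, le_refl _, by omega⟩
  le_trans a b c hab hbc :=
    ⟨hab.1.trans hbc.1, hab.2.1.trans hbc.2.1, by
      have h1 := hab.2.2; have h2 := hbc.2.2; omega⟩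
  le_antisymm a b hab hba := by
    ext
    · exact le_antisymm hab.1 hba.1
    · exact le_antisymm hab.2.1 hba.2.1

section helpers
variable {α : Type} [PartialOrder α] [Fintype α]

lemma height_ne_top (x : α) : Order.height x ≠ ⊤ := by
  have h : Order.height x ≤ (Fintype.card α : ℕ∞) := by
    apply Order.height_le
    intro p _
    have : p.length + 1 ≤ Fintype.card α := by
      simpa using Fintype.card_le_of_injective p.toFun p.strictMono.injective
    exact_mod_cast Nat.le_of_succ_le this
  exact fun ht => by rw [ht] at h; exact absurd h (by simp)

lemma height_eq_rank (x : α) : Order.height x = (rankIn α x : ℕ∞) :=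
  (ENat.coe_toNat (height_ne_top x)).symm

lemma rank_mono {a b : α} (h : a ≤ b) : rankIn α a ≤ rankIn α b :=
  ENat.toNat_le_toNat (Order.height_mono h) (height_ne_top b)

lemma rank_strictMono {a b : α} (h : a < b) : rankIn α a < rankIn α b := by
  have := Order.height_strictMono h (lt_top_iff_ne_top.2 (height_ne_top a))
  have h2 := height_ne_top b
  rw [height_eq_rank, height_eq_rank] at this
  exact_mod_cast this

lemma rank_le_length {l : ℕ} (hn : ∀ c : Set α, IsMaxChain (· ≤ ·) c → c.ncard = l + 1)
    (x : α) : rankIn α x ≤ l := by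
  have h : Order.height x ≤ (l : ℕ∞) := by
    apply Order.height_le
    intro p _
    have hchain : IsChain (· ≤ ·) (Set.range p.toFun) := by
      rintro _ ⟨i, rfl⟩ _ ⟨j, rfl⟩ _
      rcases le_total i j with h | h
      · exact Or.inl (p.strictMono.monotone h)
      · exact Or.inr (p.strictMono.monotone h)
    obtain ⟨t, ht, hsub⟩ := hchain.exists_maxChain
    have htc := hn t ht
    have hcard : (Set.range p.toFun).ncard = p.length + 1 := by
      rw [← Set.image_univ, Set.ncard_image_of_injective _ p.strictMono.injective,
        Set.ncard_univ, Nat.card_eq_fintype_card, Fintype.card_fin]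
    have : (Set.range p.toFun).ncard ≤ t.ncard :=
      Set.ncard_le_ncard hsub (Set.toFinite t)
    rw [hcard, htc] at this
    exact_mod_cast Nat.le_of_succ_le_succ this
  exact ENat.toNat_le_of_le_coe h

end helpers

section rankS
variable {Q : Type} [PartialOrder Q] [Fintype Q] {n : ℕ}

abbrev SType (Q : Type) [PartialOrder Q] (n : ℕ) : Type :=
  {x : Q × Fin (n + 1) // rankIn Q x.1 + (x.2 : ℕ) ≤ n}

lemma rankS_eq (x : SType Q n) :
    rankIn (SType Q n) x = rankIn Q x.1.1 + (x.1.2 : ℕ) := by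
  have hle : Order.height x ≤ ((rankIn Q x.1.1 + (x.1.2 : ℕ) : ℕ) : ℕ∞) := by
    have hsm : StrictMono (fun y : SType Q n => rankIn Q y.1.1 + (y.1.2 : ℕ)) := by
      intro a b hab
      show rankIn Q a.1.1 + (a.1.2 : ℕ) < rankIn Q b.1.1 + (b.1.2 : ℕ)
      have h1 : a.1.1 ≤ b.1.1 := hab.le.1
      have h2 : (a.1.2 : ℕ) ≤ (b.1.2 : ℕ) := hab.le.2
      rcases eq_or_lt_of_le h1 with heq | hlt
      · have h3 : a.1.2 < b.1.2 := by
          rcases lt_or_eq_of_le (Fin.le_def.mpr h2) with h | h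
          · exact h
          · exact absurd (Subtype.ext (Prod.ext heq h)) hab.ne
        have h4 := rank_mono (α := Q) heq.le
        have h5 : (a.1.2 : ℕ) < (b.1.2 : ℕ) := h3
        omega
      · have := rank_strictMono hlt
        omega
    have h := Order.height_le_height_apply_of_strictMono _ hsm x
    rwa [Order.height_nat] at h
  have hge : ((rankIn Q x.1.1 + (x.1.2 : ℕ) : ℕ) : ℕ∞) ≤ Order.height x := by
    obtain ⟨⟨q, i⟩, hx2⟩ := x
    simp only at hx2 ⊢
    set r := rankIn Q q with hr
    obtain ⟨a, halast, halen⟩ := Order.exists_series_of_height_eq_coe q (height_eq_rank q)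
    have hamem : ∀ m (hm : m ≤ r), rankIn Q (a ⟨m, by omega⟩) ≤ r := by
      intro m hm
      have h1 : a ⟨m, by omega⟩ ≤ a.last := by
        apply a.strictMono.monotone
        rw [Fin.le_def]
        simp only [RelSeries.last, Fin.last, halen]
        omega
      rw [halast] at h1
      exact rank_mono h1
    have haq : ∀ m (hm : m ≤ r) (hm2 : r ≤ m), a ⟨m, by omega⟩ = q := by
      intro m hm hm2
      have : (⟨m, by omega⟩ : Fin (a.length + 1)) = Fin.last a.length := by
        rw [Fin.ext_iff]; simp [Fin.last, halen]; omega
      rw [this, ← RelSeries.last, halast]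
    let f : Fin (r + (i : ℕ) + 1) → SType Q n := fun j =>
      if h : (j : ℕ) ≤ r then
        ⟨(a ⟨(j : ℕ), by omega⟩, ⟨0, by omega⟩), by
          have := hamem j h; simpa using by omega⟩
      else
        ⟨(q, ⟨(j : ℕ) - r, by omega⟩), by
          have : (j : ℕ) ≤ r + (i : ℕ) := by omega
          simp only; omega⟩
    have hstep : ∀ j : Fin (r + (i : ℕ)), f j.castSucc < f j.succ := by
      intro j
      have hj : (j.castSucc : ℕ) = (j : ℕ) := rfl
      have hjs : (j.succ : ℕ) = (j : ℕ) + 1 := rfl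
      simp only [f, Fin.coe_castSucc, Fin.val_succ]
      by_cases h1 : (j : ℕ) + 1 ≤ r
      · rw [dif_pos (by omega : (j:ℕ) ≤ r), dif_pos (by omega : (j:ℕ)+1 ≤ r)]
        apply Subtype.mk_lt_mk.mpr
        apply Prod.mk_lt_mk.mpr
        left
        constructor
        · have := a.step ⟨(j : ℕ), by omega⟩
          exact this
        · exact le_refl _
      · by_cases h2 : (j : ℕ) ≤ r
        · rw [dif_pos h2, dif_neg (by omega : ¬ (j:ℕ)+1 ≤ r)]
          apply Subtype.mk_lt_mk.mpr
          apply Prod.mk_lt_mk.mpr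
          right
          constructor
          · have h3 : (j : ℕ) = r := by omega
            rw [haq j h2 (by omega)]
          · rw [Fin.lt_def]; simp [hjs]; omega
        · rw [dif_neg h2, dif_neg (by omega : ¬ (j:ℕ)+1 ≤ r)]
          apply Subtype.mk_lt_mk.mpr
          apply Prod.mk_lt_mk.mpr
          right
          exact ⟨le_refl _, by rw [Fin.lt_def]; simp [hjs]; omega⟩
    let p : LTSeries (SType Q n) := ⟨r + (i : ℕ), f, hstep⟩
    have hplast : p.last = ⟨(q, i), hx2⟩ := by
      show f (Fin.last _) = _
      simp only [f, Fin.last]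
      by_cases h : r + (i : ℕ) ≤ r
      · rw [dif_pos h]
        have hi0 : (i : ℕ) = 0 := by omega
        exact Subtype.ext (Prod.ext (haq _ (by omega) (by omega)) (by rw [Fin.ext_iff]; simp [hi0]))
      · rw [dif_neg h]
        exact Subtype.ext (Prod.ext rfl (by rw [Fin.ext_iff]; simp))
    have := Order.length_le_height_last (p := p)
    rw [hplast] at this
    exact this
  have h := le_antisymm hle hge
  rw [rankIn, h, ENat.toNat_coe]

end rankS

/-- **Lemma (Björner–Welker, Section 3).**
Let `P` and `Q` be finite pure posets and let `n = rk P` (the common length of the maximal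
chains of `P`).  Let `Q̃ = (Q × C_n)_{[0,n]}` be the rank-selected subposet of the product of
`Q` with an `(n+1)`-element chain `C_n`, consisting of all elements of rank at most `n`.
Then the Rees product `P * Q` is isomorphic to the (unmixed) Segre product `P ∘ Q̃`;
explicitly, the map sending `(p, (q, i))` (where `rk p = rk q + i`) to `(p, q)` is an order
isomorphism. -/
theorem rees_product_iso_segre_product
    (P Q : Type) [PartialOrder P] [PartialOrder Q] [Fintype P] [Fintype Q]
    (hP : IsPurePoset P) (hQ : IsPurePoset Q) (n : ℕ)
    (hn : ∀ c : Set P, IsMaxChain (· ≤ ·) c → c.ncard = n + 1) :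
    ∃ e : {y : P × {x : Q × Fin (n + 1) // rankIn Q x.1 + (x.2 : ℕ) ≤ n} //
            rankIn P y.1 = rankIn {x : Q × Fin (n + 1) // rankIn Q x.1 + (x.2 : ℕ) ≤ n} y.2} ≃o
          ReesProduct P Q,
      ∀ y, (e y).pr = (y.1.1, y.1.2.1.1) := by
  classical
  have hPn : ∀ p : P, rankIn P p ≤ n := fun p => rank_le_length hn p
  have key : ∀ y : {y : P × SType Q n // rankIn P y.1 = rankIn (SType Q n) y.2},
      rankIn P y.1.1 = rankIn Q y.1.2.1.1 + (y.1.2.1.2 : ℕ) := by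
    intro y
    rw [y.2, rankS_eq]
  refine ⟨{
    toFun := fun y => ⟨(y.1.1, y.1.2.1.1), show rankIn Q y.1.2.1.1 ≤ rankIn P y.1.1 by have := key y; omega⟩
    invFun := fun z => ⟨(z.pr.1, ⟨(z.pr.2,
        ⟨rankIn P z.pr.1 - rankIn Q z.pr.2, by have := hPn z.pr.1; omega⟩),
        by have := hPn z.pr.1; have := z.rank_le; simp only; omega⟩),
      by rw [rankS_eq]; have := z.rank_le; simp only; omega⟩
    left_inv := by
      rintro ⟨⟨p, ⟨⟨q, i⟩, hqi⟩⟩, hy⟩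
      have hk := key ⟨⟨p, ⟨⟨q, i⟩, hqi⟩⟩, hy⟩
      simp only at hk
      apply Subtype.ext
      show (_, _) = (_, _)
      refine Prod.ext rfl (Subtype.ext (Prod.ext rfl ?_))
      rw [Fin.ext_iff]
      show rankIn P p - rankIn Q q = (i : ℕ)
      omega
    right_inv := by
      intro z
      apply ReesProduct.ext
      rfl
    map_rel_iff' := by
      intro y y'
      have hy := key y
      have hy' := key y'
      constructor
      · rintro ⟨h1, h2, h3⟩
        have h3' : (rankIn Q y'.1.2.1.1 : ℤ) - rankIn Q y.1.2.1.1 ≤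
            (rankIn P y'.1.1 : ℤ) - rankIn P y.1.1 := h3
        refine ⟨h1, h2, ?_⟩
        rw [Fin.le_def]
        omega
      · rintro ⟨h1, h2, h3⟩
        have h4 : (y.1.2.1.2 : ℕ) ≤ (y'.1.2.1.2 : ℕ) := h3
        exact ⟨h1, h2, show (rankIn Q y'.1.2.1.1 : ℤ) - rankIn Q y.1.2.1.1 ≤
            (rankIn P y'.1.1 : ℤ) - rankIn P y.1.1 from by
          have h5 := rank_mono (α := Q) h2; omega⟩ }, fun y => rfl⟩

end
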